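/- Let δ > 0, η > 0, let Z ⊆ ℝ^n be a nonempty closed convex set, z₀ ∈ Z, and ζ₁, ..., ζ_T ∈ ℝ^n. For t = 1, ..., T define s_t ∈ ℝ^n by s_{t,i} = sqrt(Σ_{τ=1}^{t} ζ_{τ,i}²), let H_t be the diagonal matrix with entries H_{t,ii} = δ + s_{t,i}, let H₀ = δ·I, and let ψ_t(u) = (1/2)⟨u − z₀, H_t(u − z₀)⟩ for t = 0, 1, ..., T. Define the dual-averaging (AdaGrad) iterates u_{t+1} = argmin_{u∈Z} (η⟨Σ_{τ=1}^{t} ζ_τ, u⟩ + ψ_t(u)) for t = 0, 1, ..., T−1 (so u₁ = z₀). Then for every u ∈ Z: Σ_{t=1}^{T} ⟨ζ_t, u_t − u⟩ ≤ (1/η)·ψ_T(u) + (η/2)·Σ_{t=1}^{T} Σ_{i=1}^{n} ζ_{t,i}²/(H_{t−1,ii}). -/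

import Mathlib

open scoped RealInnerProductSpace
open Finset

lemma aux_young (η h a d : ℝ) (hpos : 0 < h) :
    -(η^2/2 * (a^2 / h)) ≤ η * (a * d) + 1/2 * (h * d^2) := by
  have hc : a^2 / h * h = a^2 := div_mul_cancel₀ _ (ne_of_gt hpos)
  nlinarith [sq_nonneg (η * a + h * d), hpos, hc, div_nonneg (sq_nonneg a) hpos.le]

lemma sum_young {n : ℕ} (η : ℝ) (h a d : Fin n → ℝ) (hpos : ∀ i, 0 < h i) :
    -(η^2/2 * ∑ i, (a i)^2 / h i) ≤ η * (∑ i, a i * d i) + 1/2 * ∑ i, h i * (d i)^2 := by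
  have h1 := Finset.sum_le_sum (fun i (_ : i ∈ univ) => aux_young η (h i) (a i) (d i) (hpos i))
  calc -(η^2/2 * ∑ i, (a i)^2 / h i) = ∑ i, -(η^2/2 * ((a i)^2 / h i)) := by
        rw [Finset.mul_sum, ← Finset.sum_neg_distrib]
    _ ≤ ∑ i, (η * (a i * d i) + 1/2 * (h i * (d i)^2)) := h1
    _ = η * (∑ i, a i * d i) + 1/2 * ∑ i, h i * (d i)^2 := by
        rw [Finset.sum_add_distrib, Finset.mul_sum, Finset.mul_sum]

lemma aux_quad_min {n : ℕ} {Z : Set (EuclideanSpace ℝ (Fin n))} (hZcv : Convex ℝ Z)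
    (c h : Fin n → ℝ) (hh : ∀ i, 0 ≤ h i) (z₀ us w : EuclideanSpace ℝ (Fin n))
    (hus : us ∈ Z) (hw : w ∈ Z)
    (hmin : ∀ v ∈ Z, (∑ i, c i * us i) + 1/2 * ∑ i, h i * (us i - z₀ i)^2 ≤
      (∑ i, c i * v i) + 1/2 * ∑ i, h i * (v i - z₀ i)^2) :
    (∑ i, c i * us i) + 1/2 * ∑ i, h i * (us i - z₀ i)^2 + 1/2 * ∑ i, h i * (w i - us i)^2 ≤
      (∑ i, c i * w i) + 1/2 * ∑ i, h i * (w i - z₀ i)^2 := by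
  set S1 := ∑ i, c i * (w i - us i) with hS1
  set S2 := ∑ i, h i * ((us i - z₀ i) * (w i - us i)) with hS2
  set Q := ∑ i, h i * (w i - us i)^2 with hQdef
  have hQ : 0 ≤ Q := Finset.sum_nonneg fun i _ => mul_nonneg (hh i) (sq_nonneg _)
  have key : ∀ lam : ℝ, 0 < lam → lam ≤ 1 → 0 ≤ lam * (S1 + S2) + lam^2/2 * Q := by
    intro lam h0 h1
    have hv : (1 - lam) • us + lam • w ∈ Z := hZcv hus hw (by linarith) h0.le (by ring)
    have hm := hmin _ hv
    have e0 : ∀ i, ((1 - lam) • us + lam • w) i = us i + lam * (w i - us i) := by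
      intro i
      simp [PiLp.add_apply, PiLp.smul_apply, smul_eq_mul]
      ring
    have e1 : (∑ i, c i * ((1 - lam) • us + lam • w) i) = (∑ i, c i * us i) + lam * S1 := by
      rw [hS1, Finset.mul_sum, ← Finset.sum_add_distrib]
      exact Finset.sum_congr rfl fun i _ => by rw [e0 i]; ring
    have e2 : (∑ i, h i * (((1 - lam) • us + lam • w) i - z₀ i)^2)
        = (∑ i, h i * (us i - z₀ i)^2) + lam * (2 * S2) + lam^2 * Q := by
      rw [hS2, hQdef, Finset.mul_sum, Finset.mul_sum, Finset.mul_sum, ← Finset.sum_add_distrib,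
        ← Finset.sum_add_distrib]
      exact Finset.sum_congr rfl fun i _ => by rw [e0 i]; ring
    rw [e1, e2] at hm
    nlinarith [hm]
  have hB : 0 ≤ S1 + S2 := by
    by_contra hBc
    push_neg at hBc
    have hQ1 : 0 < Q + 1 := by linarith
    set lam := min 1 (-(S1 + S2) / (Q + 1)) with hlam
    have hl0 : 0 < lam := lt_min one_pos (div_pos (by linarith) hQ1)
    have hl1 : lam ≤ 1 := min_le_left _ _
    have hk := key lam hl0 hl1
    have hlQ : lam * Q ≤ -(S1 + S2) := by
      calc lam * Q ≤ (-(S1 + S2) / (Q + 1)) * Q :=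
            mul_le_mul_of_nonneg_right (min_le_right _ _) hQ
        _ ≤ -(S1 + S2) := by
            rw [div_mul_eq_mul_div, div_le_iff₀ hQ1]
            nlinarith
    nlinarith [mul_le_mul_of_nonneg_left hlQ (by linarith : (0:ℝ) ≤ lam/2),
      mul_pos hl0 (neg_pos.mpr hBc)]
  have ew1 : (∑ i, c i * w i) = (∑ i, c i * us i) + S1 := by
    rw [hS1, ← Finset.sum_add_distrib]
    exact Finset.sum_congr rfl fun i _ => by ring
  have ew2 : (∑ i, h i * (w i - z₀ i)^2) = (∑ i, h i * (us i - z₀ i)^2) + 2*S2 + Q := by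
    rw [hS2, hQdef, Finset.mul_sum, ← Finset.sum_add_distrib, ← Finset.sum_add_distrib]
    exact Finset.sum_congr rfl fun i _ => by ring
  rw [ew1, ew2]
  linarith


/-- Regret bound for the adaptive dual-averaging (AdaGrad) scheme: with diagonal preconditioners
`H_t = δ + sqrt(Σ_{τ≤t} ζ_{τ,i}²)` and `ψ_t(u) = ½⟨u − z₀, H_t(u − z₀)⟩`, the iterates
`u_{t+1} = argmin_{u∈Z} (η⟨Σ_{τ≤t} ζ_τ, u⟩ + ψ_t(u))` satisfy, for every `u ∈ Z`,
`Σ_{t=1}^T ⟨ζ_t, u_t − u⟩ ≤ (1/η)ψ_T(u) + (η/2) Σ_{t=1}^T Σ_i ζ_{t,i}²/H_{t−1,ii}`. -/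
theorem stmt19 {n : ℕ} (δ η : ℝ) (hδ : 0 < δ) (hη : 0 < η)
    (Z : Set (EuclideanSpace ℝ (Fin n)))
    (hZne : Z.Nonempty) (hZcl : IsClosed Z) (hZcv : Convex ℝ Z)
    (z₀ : EuclideanSpace ℝ (Fin n)) (hz₀ : z₀ ∈ Z)
    (T : ℕ) (ζ : ℕ → EuclideanSpace ℝ (Fin n))
    (H : ℕ → Fin n → ℝ) (ψ : ℕ → EuclideanSpace ℝ (Fin n) → ℝ)
    (hH : ∀ t, ∀ i, H t i = δ + Real.sqrt (∑ τ ∈ Finset.Icc 1 t, (ζ τ i) ^ 2))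
    (hψ : ∀ t u, ψ t u = 1 / 2 * ∑ i, H t i * (u i - z₀ i) ^ 2)
    (u : ℕ → EuclideanSpace ℝ (Fin n))
    (hu : ∀ t ∈ Finset.Icc 1 T, u t ∈ Z ∧ ∀ w ∈ Z,
      η * ⟪∑ τ ∈ Finset.Icc 1 (t - 1), ζ τ, u t⟫ + ψ (t - 1) (u t) ≤
        η * ⟪∑ τ ∈ Finset.Icc 1 (t - 1), ζ τ, w⟫ + ψ (t - 1) w) :
    ∀ w ∈ Z, ∑ t ∈ Finset.Icc 1 T, ⟪ζ t, u t - w⟫ ≤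
      1 / η * ψ T w + η / 2 * ∑ t ∈ Finset.Icc 1 T, ∑ i, (ζ t i) ^ 2 / H (t - 1) i := by
  intro w hw
  -- basic facts
  have hHpos : ∀ t i, 0 < H t i := by
    intro t i; rw [hH]
    have := Real.sqrt_nonneg (∑ τ ∈ Finset.Icc 1 t, (ζ τ i) ^ 2)
    linarith
  have hHmono : ∀ s t : ℕ, s ≤ t → ∀ i, H s i ≤ H t i := by
    intro s t hst i; rw [hH, hH]
    have h1 : (∑ τ ∈ Finset.Icc 1 s, (ζ τ i) ^ 2) ≤ ∑ τ ∈ Finset.Icc 1 t, (ζ τ i) ^ 2 :=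
      Finset.sum_le_sum_of_subset_of_nonneg (Finset.Icc_subset_Icc_right hst)
        (fun τ _ _ => sq_nonneg _)
    have := Real.sqrt_le_sqrt h1
    linarith
  -- convert inner products
  have inner_eq : ∀ (s : Finset ℕ) (v : EuclideanSpace ℝ (Fin n)),
      ⟪∑ τ ∈ s, ζ τ, v⟫ = ∑ i, (∑ τ ∈ s, ζ τ i) * v i := by
    intro s v
    rw [sum_inner]
    simp only [PiLp.inner_apply, RCLike.inner_apply, conj_trivial]
    rw [Finset.sum_comm]
    exact Finset.sum_congr rfl fun i _ => by rw [Finset.sum_mul]; exact Finset.sum_congr rfl fun _ _ => mul_comm _ _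
  have lin_eq : ∀ (k : ℕ) (v : EuclideanSpace ℝ (Fin n)),
      η * ⟪∑ τ ∈ Finset.Icc 1 k, ζ τ, v⟫ = ∑ i, (η * ∑ τ ∈ Finset.Icc 1 k, ζ τ i) * v i := by
    intro k v
    rw [inner_eq, Finset.mul_sum]
    exact Finset.sum_congr rfl fun i _ => (mul_assoc _ _ _).symm
  -- cleaned minimality hypothesis
  have hu' : ∀ t : ℕ, 1 ≤ t → t ≤ T → u t ∈ Z ∧ ∀ v ∈ Z,
      (∑ i, (η * ∑ τ ∈ Finset.Icc 1 (t-1), ζ τ i) * u t i)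
        + 1/2 * ∑ i, H (t-1) i * (u t i - z₀ i)^2 ≤
      (∑ i, (η * ∑ τ ∈ Finset.Icc 1 (t-1), ζ τ i) * v i)
        + 1/2 * ∑ i, H (t-1) i * (v i - z₀ i)^2 := by
    intro t h1 h2
    obtain ⟨hmem, hmin⟩ := hu t (Finset.mem_Icc.mpr ⟨h1, h2⟩)
    refine ⟨hmem, fun v hv => ?_⟩
    have := hmin v hv
    rw [lin_eq, lin_eq, hψ, hψ] at this
    convert this using 2 <;> norm_num
  -- main induction claim
  have claim : ∀ k : ℕ, k + 1 ≤ T →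
      (∑ s ∈ Finset.Icc 1 k, (η * ∑ i, ζ s i * u s i
          - η^2/2 * ∑ i, (ζ s i)^2 / H (s-1) i)) ≤
      (∑ i, (η * ∑ τ ∈ Finset.Icc 1 k, ζ τ i) * u (k+1) i)
        + 1/2 * ∑ i, H k i * (u (k+1) i - z₀ i)^2 := by
    intro k
    induction k with
    | zero =>
      intro h1
      have he : Finset.Icc 1 0 = (∅ : Finset ℕ) := by simp
      rw [he]
      simp only [Finset.sum_empty, mul_zero, zero_mul, Finset.sum_const_zero, zero_add]
      have : 0 ≤ ∑ x, H 0 x * (u 1 x - z₀ x)^2 :=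
        Finset.sum_nonneg fun i _ => mul_nonneg (hHpos 0 i).le (sq_nonneg _)
      linarith
    | succ k ih =>
      intro hk2
      have hk1 : k + 1 ≤ T := by omega
      have ihk := ih hk1
      obtain ⟨huk1, hmin1⟩ := hu' (k+1) (by omega) hk1
      obtain ⟨huk2, _⟩ := hu' (k+2) (by omega) hk2
      simp only [Nat.add_sub_cancel] at hmin1
      -- strong-convexity at the minimizer u(k+1), compared with u(k+2)
      have hq := aux_quad_min hZcv (fun i => η * ∑ τ ∈ Finset.Icc 1 k, ζ τ i) (H k)
        (fun i => (hHpos k i).le) z₀ (u (k+1)) (u (k+2)) huk1 huk2 hmin1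
      -- Young's inequality with d = u(k+2) - u(k+1)
      have hy := sum_young η (H k) (fun i => ζ (k+1) i)
        (fun i => u (k+2) i - u (k+1) i) (hHpos k)
      -- split the linear part of Φ(k+1) at u(k+2)
      have hL : ∀ i, (∑ τ ∈ Finset.Icc 1 (k+1), ζ τ i) = (∑ τ ∈ Finset.Icc 1 k, ζ τ i) + ζ (k+1) i :=
        fun i => Finset.sum_Icc_succ_top (by omega) _
      have hlin : (∑ i, (η * ∑ τ ∈ Finset.Icc 1 (k+1), ζ τ i) * u (k+2) i)
          = (∑ i, (η * ∑ τ ∈ Finset.Icc 1 k, ζ τ i) * u (k+2) i)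
            + η * ∑ i, ζ (k+1) i * u (k+2) i := by
        rw [Finset.mul_sum, ← Finset.sum_add_distrib]
        exact Finset.sum_congr rfl fun i _ => by rw [hL i]; ring
      -- split ζ(k+1)·u(k+2) into ζ·u(k+1) + ζ·d
      have hsplit : (∑ i, ζ (k+1) i * u (k+2) i)
          = (∑ i, ζ (k+1) i * u (k+1) i) + ∑ i, ζ (k+1) i * (u (k+2) i - u (k+1) i) := by
        rw [← Finset.sum_add_distrib]
        exact Finset.sum_congr rfl fun i _ => by ring
      -- monotonicity of quadratic term
      have hqm : (1:ℝ)/2 * ∑ i, H k i * (u (k+2) i - z₀ i)^2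
          ≤ 1/2 * ∑ i, H (k+1) i * (u (k+2) i - z₀ i)^2 := by
        have := Finset.sum_le_sum (fun i (_ : i ∈ univ) =>
          mul_le_mul_of_nonneg_right (hHmono k (k+1) (by omega) i) (sq_nonneg (u (k+2) i - z₀ i)))
        linarith
      -- split P(k+1)
      have hP : (∑ s ∈ Finset.Icc 1 (k+1), (η * ∑ i, ζ s i * u s i
            - η^2/2 * ∑ i, (ζ s i)^2 / H (s-1) i))
          = (∑ s ∈ Finset.Icc 1 k, (η * ∑ i, ζ s i * u s i
            - η^2/2 * ∑ i, (ζ s i)^2 / H (s-1) i))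
            + (η * ∑ i, ζ (k+1) i * u (k+1) i
              - η^2/2 * ∑ i, (ζ (k+1) i)^2 / H k i) := by
        rw [Finset.sum_Icc_succ_top (by omega)]
        norm_num
      rw [hP, hlin, hsplit]
      linarith
  -- pointwise inner product for the goal
  have hinner : ∀ t, ⟪ζ t, u t - w⟫ = (∑ i, ζ t i * u t i) - (∑ i, ζ t i * w i) := by
    intro t
    simp only [PiLp.inner_apply, RCLike.inner_apply, conj_trivial, PiLp.sub_apply]
    rw [← Finset.sum_sub_distrib]
    exact Finset.sum_congr rfl fun i _ => by ring
  rcases Nat.eq_zero_or_pos T with hT0 | hT1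
  · subst hT0
    have he : Finset.Icc 1 0 = (∅ : Finset ℕ) := by simp
    rw [he]
    simp only [Finset.sum_empty, mul_zero, add_zero]
    have h0 : 0 ≤ ∑ i, H 0 i * (w i - z₀ i)^2 :=
      Finset.sum_nonneg fun i _ => mul_nonneg (hHpos 0 i).le (sq_nonneg _)
    rw [hψ]
    have h1η : 0 ≤ 1/η := by positivity
    nlinarith
  · obtain ⟨T', rfl⟩ : ∃ T', T = T' + 1 := ⟨T - 1, by omega⟩
    have hcl := claim T' (by omega)
    obtain ⟨huT, hminT⟩ := hu' (T'+1) (by omega) (by omega)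
    simp only [Nat.add_sub_cancel] at hminT
    have hq := aux_quad_min hZcv (fun i => η * ∑ τ ∈ Finset.Icc 1 T', ζ τ i) (H T')
      (fun i => (hHpos T' i).le) z₀ (u (T'+1)) w huT hw hminT
    have hy := sum_young η (H T') (fun i => ζ (T'+1) i)
      (fun i => w i - u (T'+1) i) (hHpos T')
    simp only at hy
    have hys : (∑ i, ζ (T'+1) i * (w i - u (T'+1) i))
        = (∑ i, ζ (T'+1) i * w i) - (∑ i, ζ (T'+1) i * u (T'+1) i) := by
      rw [← Finset.sum_sub_distrib]
      exact Finset.sum_congr rfl fun i _ => by ring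
    rw [hys] at hy
    -- swap sums in the linear part of Φ at w
    have hswapW : (∑ i, (η * ∑ τ ∈ Finset.Icc 1 T', ζ τ i) * w i)
        = η * ∑ τ ∈ Finset.Icc 1 T', ∑ i, ζ τ i * w i := by
      calc (∑ i, (η * ∑ τ ∈ Finset.Icc 1 T', ζ τ i) * w i)
          = ∑ i, ∑ τ ∈ Finset.Icc 1 T', η * (ζ τ i * w i) := by
            refine Finset.sum_congr rfl fun i _ => ?_
            rw [mul_assoc, Finset.sum_mul, Finset.mul_sum]
        _ = ∑ τ ∈ Finset.Icc 1 T', ∑ i, η * (ζ τ i * w i) := Finset.sum_comm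
        _ = η * ∑ τ ∈ Finset.Icc 1 T', ∑ i, ζ τ i * w i := by
            rw [Finset.mul_sum]
            exact Finset.sum_congr rfl fun τ _ => (Finset.mul_sum _ _ _).symm
    rw [hswapW] at hq
    -- split P(T')
    have hPsplit : (∑ s ∈ Finset.Icc 1 T', (η * ∑ i, ζ s i * u s i
          - η^2/2 * ∑ i, (ζ s i)^2 / H (s-1) i))
        = η * (∑ s ∈ Finset.Icc 1 T', ∑ i, ζ s i * u s i)
          - η^2/2 * (∑ s ∈ Finset.Icc 1 T', ∑ i, (ζ s i)^2 / H (s-1) i) := by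
      rw [Finset.sum_sub_distrib, ← Finset.mul_sum, ← Finset.mul_sum]
    rw [hPsplit] at hcl
    -- rewrite the goal
    have hgoal1 : (∑ t ∈ Finset.Icc 1 (T'+1), ⟪ζ t, u t - w⟫ : ℝ)
        = ((∑ t ∈ Finset.Icc 1 T', ∑ i, ζ t i * u t i)
            - ∑ t ∈ Finset.Icc 1 T', ∑ i, ζ t i * w i)
          + ((∑ i, ζ (T'+1) i * u (T'+1) i) - ∑ i, ζ (T'+1) i * w i) := by
      rw [Finset.sum_congr rfl (fun t _ => hinner t), Finset.sum_Icc_succ_top (by omega),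
        Finset.sum_sub_distrib]
    have hSsplit : (∑ t ∈ Finset.Icc 1 (T'+1), ∑ i, (ζ t i)^2 / H (t-1) i)
        = (∑ t ∈ Finset.Icc 1 T', ∑ i, (ζ t i)^2 / H (t-1) i)
          + ∑ i, (ζ (T'+1) i)^2 / H T' i := by
      rw [Finset.sum_Icc_succ_top (by omega)]
      norm_num
    have hψT : 1/2 * ∑ i, H T' i * (w i - z₀ i)^2 ≤ ψ (T'+1) w := by
      rw [hψ]
      have := Finset.sum_le_sum (fun i (_ : i ∈ Finset.univ) =>
        mul_le_mul_of_nonneg_right (hHmono T' (T'+1) (by omega) i) (sq_nonneg (w i - z₀ i)))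
      linarith
    rw [← mul_le_mul_iff_right₀ hη]
    have hrhs : η * (1 / η * ψ (T'+1) w
          + η / 2 * ∑ t ∈ Finset.Icc 1 (T'+1), ∑ i, (ζ t i) ^ 2 / H (t - 1) i)
        = ψ (T'+1) w
          + η^2/2 * ∑ t ∈ Finset.Icc 1 (T'+1), ∑ i, (ζ t i) ^ 2 / H (t - 1) i := by
      field_simp
    rw [hrhs, hgoal1, hSsplit]
    nlinarith [hcl, hq, hy, hψT]
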